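/- Let h ≥ 2 and s ≥ 1, set d := k + s − 1 and m := s + h − 1, assume h + d ≤ n, and let λ : {1,…,n} × {0,…,s−1} → F be injective. Let 𝓕, 𝓡 ⊆ {1,…,n} be disjoint sets with |𝓕| = h and |𝓡| = d. Then there exist functions φ_j : N → M^h for each j ∈ 𝓡 and a function ρ : (𝓡 → M^h) → (𝓕 → N) such that for every codeword c of C(n,k,s,m,λ), ρ( (j ↦ φ_j(c_j)) ) = (u ↦ c_u), where c_i ∈ N denotes the i-th node (b,a) ↦ c(i,b,a). Since each helper node transmits h·s^n symbols of F, the total download is h·d·s^n symbols, which meets the centralized cut-set bound |𝓕||𝓡|·l / (|𝓕|+|𝓡|−k) with equality for node size l = (d+h−k)·s^n; in other words, the code C(n,k,s,m,λ) achieves the optimal repair bandwidth under the centralized model. -/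

import Mathlib

/-- The code `C(n,k,s,m,λ)`: an array `c : {1,…,n} × {1,…,m} × {0,…,s-1}^n → F`
(node index `i : Fin n`, block index `b ∈ {1,…,m}` as a natural number,
`a : Fin n → Fin s`) satisfying the parity-check equations
`∑_{i=1}^n λ(i,a_i)^t · c(i,b,a) = 0` for all `t ∈ {0,…,n-k-1}`,
`b ∈ {1,…,m}` and `a ∈ {0,…,s-1}^n`. -/
def IsCodeword {F : Type*} [Field F] {n : ℕ} (k s m : ℕ)
    (lam : Fin n → Fin s → F) (c : Fin n → ℕ → (Fin n → Fin s) → F) : Prop :=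
  ∀ t < n - k, ∀ b ∈ Finset.Icc 1 m, ∀ a : Fin n → Fin s,
    ∑ i, lam i (a i) ^ t * c i b a = 0

set_option linter.unusedSectionVars false
set_option maxHeartbeats 1000000


open Finset Matrix in
theorem s15_vkill {F : Type*} [Field F] {ι : Type*} [Fintype ι] [DecidableEq ι]
    (pts : ι → F) (hinj : Function.Injective pts) (v : ι → F) (N : ℕ)
    (hcard : Fintype.card ι ≤ N)
    (H : ∀ t, t < N → ∑ i, pts i ^ t * v i = 0) : ∀ i, v i = 0 := by
  classical
  let e := Fintype.equivFin ι
  set M : Matrix (Fin (Fintype.card ι)) (Fin (Fintype.card ι)) F :=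
    (Matrix.vandermonde (fun j => pts (e.symm j)))ᵀ with hM
  have hdet : M.det ≠ 0 := by
    rw [hM, Matrix.det_transpose, Matrix.det_vandermonde_ne_zero_iff]
    exact hinj.comp e.symm.injective
  have h0 : M.mulVec (fun j => v (e.symm j)) = 0 := by
    funext t
    have := H (t : ℕ) (lt_of_lt_of_le t.isLt hcard)
    rw [← Equiv.sum_comp e.symm (fun i => pts i ^ (t:ℕ) * v i)] at this
    simpa [hM, Matrix.mulVec, Matrix.vandermonde, dotProduct, Matrix.transpose_apply] using this
  have hz := Matrix.eq_zero_of_mulVec_eq_zero hdet h0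
  intro i
  have := congrFun hz (e i)
  simpa using this

theorem s15_ekill {F : Type*} [Field F] {N : ℕ} (pts : Fin N → F)
    (hinj : Function.Injective pts) (v : Fin N → F)
    (H : ∀ q, ∑ t : Fin N, v t * pts q ^ (t : ℕ) = 0) : ∀ t, v t = 0 := by
  have hdet : (Matrix.vandermonde pts).det ≠ 0 :=
    Matrix.det_vandermonde_ne_zero_iff.2 hinj
  have h0 : (Matrix.vandermonde pts).mulVec v = 0 := by
    funext q
    simpa [Matrix.mulVec, Matrix.vandermonde, dotProduct, mul_comm] using H q
  intro t
  exact congrFun (Matrix.eq_zero_of_mulVec_eq_zero hdet h0) t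

theorem s15_c0 {F : Type*} [Field F] (a b c : F) (hab : a ≠ b) (hac : a ≠ c)
    (hbc : b ≠ c) : ∃ x : F, x ≠ 0 ∧ 1 + x ≠ 0 := by
  by_contra hcon
  push_neg at hcon
  have key : ∀ x y : F, x ≠ 0 → y ≠ 0 → x = y := by
    intro x y hx hy
    have h1 := hcon x hx
    have h2 := hcon y hy
    linear_combination h1 - h2
  by_cases ha : a = 0
  · have hb : b ≠ 0 := fun hb => hab (by rw [ha, hb])
    have hc : c ≠ 0 := fun hc => hac (by rw [ha, hc])
    exact hbc (key b c hb hc)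
  · by_cases hb : b = 0
    · have hc : c ≠ 0 := fun hc => hbc (by rw [hb, hc])
      exact hac (key a c ha hc)
    · exact hab (key a b ha hb)


section S15Defs

variable {F : Type*} [Field F] {n h s : ℕ} [NeZero s]

noncomputable def s15E (Fs : Finset (Fin n)) (hF : Fs.card = h) : {x // x ∈ Fs} ≃ Fin h :=
  Fs.equivFinOfCardEq hF

noncomputable def s15e (Fs : Finset (Fin n)) (hF : Fs.card = h) : Fin h → Fin n :=
  fun q => ((s15E Fs hF).symm q : {x // x ∈ Fs})

noncomputable def s15upd (Fs : Finset (Fin n)) (hF : Fs.card = h)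
    (a : Fin n → Fin s) (x : Fin h → Fin s) : Fin n → Fin s :=
  fun i => if hi : i ∈ Fs then x (s15E Fs hF ⟨i, hi⟩) else a i

noncomputable def s15eta (lam : Fin n → Fin s → F) (Fs : Finset (Fin n)) (hF : Fs.card = h)
    (q : Fin h) (r b : ℕ) : F :=
  (if b = r + 1 then 1 else 0) - (if s < b then lam (s15e Fs hF q) 0 ^ (b - s) else 0)

noncomputable def s15W (lam : Fin n → Fin s → F) (Fs : Finset (Fin n)) (hF : Fs.card = h)
    (c₀ : F) (q : Fin h) (r : ℕ) (x'' : Fin s) (b : ℕ) : F :=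
  s15eta lam Fs hF q r b + c₀ * lam (s15e Fs hF q) x'' ^ r * s15eta lam Fs hF q 0 b

noncomputable def s15phi (lam : Fin n → Fin s → F) (Fs : Finset (Fin n)) (hF : Fs.card = h)
    (c₀ : F) (i : Fin n) (ci : ℕ → (Fin n → Fin s) → F) :
    Fin h → (Fin n → Fin s) → F :=
  fun q a => ∑ x'' : Fin s, ∑ b ∈ Finset.Icc 1 (s + h - 1),
    s15W lam Fs hF c₀ q (a (s15e Fs hF q) : ℕ) x'' b * ci b (Function.update a (s15e Fs hF q) x'')

lemma s15e_mem (Fs : Finset (Fin n)) (hF : Fs.card = h) (q : Fin h) :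
    s15e Fs hF q ∈ Fs := ((s15E Fs hF).symm q).2

lemma s15E_e (Fs : Finset (Fin n)) (hF : Fs.card = h) (q : Fin h)
    (hq : s15e Fs hF q ∈ Fs) : s15E Fs hF ⟨s15e Fs hF q, hq⟩ = q := by
  have : (⟨s15e Fs hF q, hq⟩ : {x // x ∈ Fs}) = (s15E Fs hF).symm q := rfl
  rw [this, Equiv.apply_symm_apply]

lemma s15e_inj (Fs : Finset (Fin n)) (hF : Fs.card = h) :
    Function.Injective (s15e Fs hF) := by
  intro q1 q2 hq
  have := Subtype.ext (p := fun x => x ∈ Fs) hq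
  exact (s15E Fs hF).symm.injective this

lemma s15e_E (Fs : Finset (Fin n)) (hF : Fs.card = h) (i : Fin n) (hi : i ∈ Fs) :
    s15e Fs hF (s15E Fs hF ⟨i, hi⟩) = i := by
  simp [s15e, Equiv.symm_apply_apply]

lemma s15upd_e (Fs : Finset (Fin n)) (hF : Fs.card = h) (a : Fin n → Fin s)
    (x : Fin h → Fin s) (q : Fin h) : s15upd Fs hF a x (s15e Fs hF q) = x q := by
  have hq := s15e_mem Fs hF q
  simp only [s15upd, dif_pos hq, s15E_e Fs hF q hq]

lemma s15upd_not (Fs : Finset (Fin n)) (hF : Fs.card = h) (a : Fin n → Fin s)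
    (x : Fin h → Fin s) (i : Fin n) (hi : i ∉ Fs) : s15upd Fs hF a x i = a i :=
  dif_neg hi

lemma s15upd_update (Fs : Finset (Fin n)) (hF : Fs.card = h) (a : Fin n → Fin s)
    (x : Fin h → Fin s) (q : Fin h) (y : Fin s) :
    Function.update (s15upd Fs hF a x) (s15e Fs hF q) y
      = s15upd Fs hF a (Function.update x q y) := by
  funext i
  by_cases hi : i ∈ Fs
  · by_cases hiq : i = s15e Fs hF q
    · subst hiq
      rw [Function.update_self, s15upd_e]
      simp
    · rw [Function.update_of_ne hiq]
      have hQ : s15E Fs hF ⟨i, hi⟩ ≠ q := by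
        intro hEq
        exact hiq (by rw [← hEq, s15e_E])
      simp only [s15upd, dif_pos hi, Function.update_of_ne hQ]
  · have hiq : i ≠ s15e Fs hF q := fun hEq => hi (hEq ▸ s15e_mem Fs hF q)
    rw [Function.update_of_ne hiq, s15upd_not _ _ _ _ _ hi, s15upd_not _ _ _ _ _ hi]

lemma s15upd_self (Fs : Finset (Fin n)) (hF : Fs.card = h) (a : Fin n → Fin s) :
    s15upd Fs hF a (fun q => a (s15e Fs hF q)) = a := by
  funext i
  by_cases hi : i ∈ Fs
  · simp only [s15upd, dif_pos hi, s15e_E]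
  · exact s15upd_not _ _ _ _ _ hi

end S15Defs

theorem s15_kernel {F : Type*} [Field F] {n k h s : ℕ} [NeZero s]
    (hk : 1 ≤ k) (hh : 2 ≤ h) (hn : h + (k + s - 1) ≤ n)
    (lam : Fin n → Fin s → F)
    (hlam : Function.Injective fun p : Fin n × Fin s => lam p.1 p.2)
    (Fs Rs : Finset (Fin n)) (hdisj : Disjoint Fs Rs)
    (hFcard : Fs.card = h) (hRcard : Rs.card = k + s - 1)
    (c₀ : F) (hc₀0 : c₀ ≠ 0) (hc₀1 : 1 + c₀ ≠ 0)
    (c : Fin n → ℕ → (Fin n → Fin s) → F)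
    (hcode : IsCodeword k s (s + h - 1) lam c)
    (htr : ∀ j ∈ Rs, ∀ q a, s15phi lam Fs hFcard c₀ j (c j) q a = 0) :
    ∀ q₀ : Fin h, ∀ b₀ ∈ Finset.Icc 1 (s + h - 1), ∀ a₀ : Fin n → Fin s,
      c (s15e Fs hFcard q₀) b₀ a₀ = 0 := by
  intro q₀ b₀ hb₀ a₀
  have hs1 : 1 ≤ s := NeZero.one_le
  set m := s + h - 1 with hm
  have hsm : s ≤ m := by omega
  have expand : ∀ (q : Fin h) (r : ℕ) (x'' : Fin s) (f : ℕ → F),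
      ∑ b ∈ Finset.Icc 1 m, s15W lam Fs hFcard c₀ q r x'' b * f b
      = (∑ b ∈ Finset.Icc 1 m, s15eta lam Fs hFcard q r b * f b)
        + c₀ * lam (s15e Fs hFcard q) x'' ^ r
          * (∑ b ∈ Finset.Icc 1 m, s15eta lam Fs hFcard q 0 b * f b) := by
    intro q r x'' f
    rw [Finset.mul_sum, ← Finset.sum_add_distrib]
    refine Finset.sum_congr rfl fun b _ => ?_
    simp only [s15W]; ring
  have key : ∀ (q : Fin h) (r : ℕ), r < s → ∀ (x : Fin h → Fin s),
      (∀ x'' : Fin s, ∑ b ∈ Finset.Icc 1 m, s15W lam Fs hFcard c₀ q r x'' b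
          * c (s15e Fs hFcard q) b (s15upd Fs hFcard a₀ (Function.update x q x'')) = 0) ∧
      (∀ q' : Fin h, q' ≠ q → ∑ x'' : Fin s, ∑ b ∈ Finset.Icc 1 m,
          s15W lam Fs hFcard c₀ q r x'' b
          * c (s15e Fs hFcard q') b (s15upd Fs hFcard a₀ (Function.update x q x'')) = 0) := by
    intro q r hrs x
    classical
    have hcol_e : ∀ x'' : Fin s,
        s15upd Fs hFcard a₀ (Function.update x q x'') (s15e Fs hFcard q) = x'' := by
      intro x''
      rw [s15upd_e, Function.update_self]
    have hcol_ux : ∀ (x'' : Fin s) (i : Fin n), i ≠ s15e Fs hFcard q →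
        s15upd Fs hFcard a₀ (Function.update x q x'') i = s15upd Fs hFcard a₀ x i := by
      intro x'' i hi
      by_cases hmem : i ∈ Fs
      · have hq'' : s15e Fs hFcard (s15E Fs hFcard ⟨i, hmem⟩) = i := s15e_E Fs hFcard i hmem
        have hne : s15E Fs hFcard ⟨i, hmem⟩ ≠ q := by
          intro hEq
          apply hi
          rw [← hq'', hEq]
        simp only [s15upd, dif_pos hmem, Function.update_of_ne hne]
      · rw [s15upd_not _ _ _ _ _ hmem, s15upd_not _ _ _ _ _ hmem]
    have heqRs : s15e Fs hFcard q ∉ Rs := fun hmem =>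
      (Finset.disjoint_left.mp hdisj (s15e_mem Fs hFcard q)) hmem
    set S : Finset (Fin n) := (insert (s15e Fs hFcard q) Rs)ᶜ with hSdef
    have hScard : S.card = n - (k + s - 1 + 1) := by
      rw [hSdef, Finset.card_compl, Finset.card_insert_of_notMem heqRs, hRcard, Fintype.card_fin]
    have hSne : ∀ i ∈ S, i ≠ s15e Fs hFcard q ∧ i ∉ Rs := by
      intro i hi
      rw [hSdef, Finset.mem_compl, Finset.mem_insert] at hi
      push_neg at hi
      exact hi
    set pts : ({i : Fin n // i ∈ S} ⊕ Fin s) → F := Sum.elim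
        (fun i => lam i.1 (s15upd Fs hFcard a₀ x i.1))
        (fun x'' => lam (s15e Fs hFcard q) x'') with hpts
    set v : ({i : Fin n // i ∈ S} ⊕ Fin s) → F := Sum.elim
        (fun i => ∑ x'' : Fin s, ∑ b ∈ Finset.Icc 1 m, s15W lam Fs hFcard c₀ q r x'' b
          * c i.1 b (s15upd Fs hFcard a₀ (Function.update x q x'')))
        (fun x'' => ∑ b ∈ Finset.Icc 1 m, s15W lam Fs hFcard c₀ q r x'' b
          * c (s15e Fs hFcard q) b (s15upd Fs hFcard a₀ (Function.update x q x''))) with hv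
    have hcard : Fintype.card ({i : Fin n // i ∈ S} ⊕ Fin s) ≤ n - k := by
      rw [Fintype.card_sum, Fintype.card_coe, hScard, Fintype.card_fin]
      omega
    have hptsinj : Function.Injective pts := by
      intro i1 i2 h12
      match i1, i2 with
      | Sum.inl i1, Sum.inl i2 =>
        simp only [hpts, Sum.elim_inl] at h12
        have hp := hlam (a₁ := (i1.1, s15upd Fs hFcard a₀ x i1.1))
          (a₂ := (i2.1, s15upd Fs hFcard a₀ x i2.1)) h12
        rw [Prod.mk.injEq] at hp
        exact congrArg Sum.inl (Subtype.ext hp.1)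
      | Sum.inl i1, Sum.inr y2 =>
        simp only [hpts, Sum.elim_inl, Sum.elim_inr] at h12
        have hp := hlam (a₁ := (i1.1, s15upd Fs hFcard a₀ x i1.1))
          (a₂ := (s15e Fs hFcard q, y2)) h12
        rw [Prod.mk.injEq] at hp
        exact absurd hp.1 (hSne i1.1 i1.2).1
      | Sum.inr y1, Sum.inl i2 =>
        simp only [hpts, Sum.elim_inl, Sum.elim_inr] at h12
        have hp := hlam (a₁ := (s15e Fs hFcard q, y1))
          (a₂ := (i2.1, s15upd Fs hFcard a₀ x i2.1)) h12
        rw [Prod.mk.injEq] at hp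
        exact absurd hp.1.symm (hSne i2.1 i2.2).1
      | Sum.inr y1, Sum.inr y2 =>
        simp only [hpts, Sum.elim_inr] at h12
        have hp := hlam (a₁ := (s15e Fs hFcard q, y1)) (a₂ := (s15e Fs hFcard q, y2)) h12
        rw [Prod.mk.injEq] at hp
        exact congrArg Sum.inr hp.2
    have hvanish : ∀ t, t < n - k → ∑ i, pts i ^ t * v i = 0 := by
      intro t ht
      set G : Fin n → F := fun i => ∑ x'' : Fin s, ∑ b ∈ Finset.Icc 1 m,
        s15W lam Fs hFcard c₀ q r x'' b
          * (lam i (s15upd Fs hFcard a₀ (Function.update x q x'') i) ^ t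
             * c i b (s15upd Fs hFcard a₀ (Function.update x q x''))) with hG
      have g1 : ∑ i : Fin n, G i = 0 := by
        simp only [hG]
        rw [Finset.sum_comm]
        refine Finset.sum_eq_zero fun x'' _ => ?_
        rw [Finset.sum_comm]
        refine Finset.sum_eq_zero fun b hb => ?_
        rw [← Finset.mul_sum,
          hcode t ht b hb (s15upd Fs hFcard a₀ (Function.update x q x'')), mul_zero]
      have g2 : ∑ i ∈ insert (s15e Fs hFcard q) Rs, G i + ∑ i ∈ S, G i = ∑ i : Fin n, G i := by
        rw [hSdef]
        exact Finset.sum_add_sum_compl _ _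
      have gRs : ∀ j ∈ Rs, G j = 0 := by
        intro j hj
        have hjF : j ∉ Fs := fun hmem => (Finset.disjoint_left.mp hdisj hmem) hj
        have hcolj : ∀ x'' : Fin s,
            s15upd Fs hFcard a₀ (Function.update x q x'') j = a₀ j :=
          fun x'' => s15upd_not _ _ _ _ _ hjF
        have hφ := htr j hj q (s15upd Fs hFcard a₀ (Function.update x q ⟨r, hrs⟩))
        unfold s15phi at hφ
        rw [s15upd_e, Function.update_self] at hφ
        have hupdcomp : ∀ x'' : Fin s,
            Function.update (s15upd Fs hFcard a₀ (Function.update x q ⟨r, hrs⟩))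
              (s15e Fs hFcard q) x''
            = s15upd Fs hFcard a₀ (Function.update x q x'') := by
          intro x''
          rw [s15upd_update, Function.update_idem]
        simp only [hupdcomp, Fin.val_mk, ← hm] at hφ
        simp only [hG]
        calc ∑ x'' : Fin s, ∑ b ∈ Finset.Icc 1 m, s15W lam Fs hFcard c₀ q r x'' b
              * (lam j (s15upd Fs hFcard a₀ (Function.update x q x'') j) ^ t
                * c j b (s15upd Fs hFcard a₀ (Function.update x q x'')))
            = lam j (a₀ j) ^ t * ∑ x'' : Fin s, ∑ b ∈ Finset.Icc 1 m,
                s15W lam Fs hFcard c₀ q r x'' b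
                  * c j b (s15upd Fs hFcard a₀ (Function.update x q x'')) := by
              rw [Finset.mul_sum]
              refine Finset.sum_congr rfl fun x'' _ => ?_
              rw [Finset.mul_sum]
              refine Finset.sum_congr rfl fun b _ => ?_
              rw [hcolj x'']
              ring
          _ = 0 := by rw [hφ, mul_zero]
      have gS : ∀ (i : Fin n) (hi : i ∈ S),
          G i = pts (Sum.inl ⟨i, hi⟩) ^ t * v (Sum.inl ⟨i, hi⟩) := by
        intro i hi
        have hine : i ≠ s15e Fs hFcard q := (hSne i hi).1
        simp only [hG, hpts, hv, Sum.elim_inl]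
        rw [Finset.mul_sum]
        refine Finset.sum_congr rfl fun x'' _ => ?_
        rw [Finset.mul_sum]
        refine Finset.sum_congr rfl fun b _ => ?_
        rw [hcol_ux x'' i hine]
        ring
      have gE : G (s15e Fs hFcard q)
          = ∑ x'' : Fin s, pts (Sum.inr x'') ^ t * v (Sum.inr x'') := by
        simp only [hG, hpts, hv, Sum.elim_inr]
        refine Finset.sum_congr rfl fun x'' _ => ?_
        rw [hcol_e x'', Finset.mul_sum]
        refine Finset.sum_congr rfl fun b _ => ?_
        ring
      calc ∑ i, pts i ^ t * v i
          = (∑ i : {i : Fin n // i ∈ S}, pts (Sum.inl i) ^ t * v (Sum.inl i))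
            + ∑ x'' : Fin s, pts (Sum.inr x'') ^ t * v (Sum.inr x'') := Fintype.sum_sum_type _
        _ = (∑ i : {i : Fin n // i ∈ S}, G i.1) + G (s15e Fs hFcard q) := by
            rw [← gE]
            congr 1
            exact Finset.sum_congr rfl fun i _ => (gS i.1 i.2).symm
        _ = (∑ i ∈ S, G i) + G (s15e Fs hFcard q) := by
            rw [Finset.sum_coe_sort S G]
        _ = (∑ i ∈ S, G i) + ∑ i ∈ insert (s15e Fs hFcard q) Rs, G i := by
            rw [Finset.sum_insert heqRs, Finset.sum_eq_zero gRs, add_zero]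
        _ = 0 := by rw [add_comm, g2, g1]
    have hz := s15_vkill pts hptsinj v (n-k) hcard hvanish
    constructor
    · intro x''
      have hzz := hz (Sum.inr x'')
      simpa only [hv, Sum.elim_inr] using hzz
    · intro q' hq'
      have hmem : s15e Fs hFcard q' ∈ S := by
        rw [hSdef, Finset.mem_compl, Finset.mem_insert]
        push_neg
        exact ⟨fun hEq => hq' (s15e_inj Fs hFcard hEq), fun hmem2 =>
          (Finset.disjoint_left.mp hdisj (s15e_mem Fs hFcard q')) hmem2⟩
      have hzz := hz (Sum.inl ⟨s15e Fs hFcard q', hmem⟩)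
      simpa only [hv, Sum.elim_inl] using hzz
  have eta_split : ∀ (q q'' : Fin h) (r : ℕ), r < s → ∀ (z : Fin h → Fin s),
      ∑ b ∈ Finset.Icc 1 m, s15eta lam Fs hFcard q r b
          * c (s15e Fs hFcard q'') b (s15upd Fs hFcard a₀ z)
      = c (s15e Fs hFcard q'') (r+1) (s15upd Fs hFcard a₀ z)
        - ∑ b ∈ Finset.Ioc s m, lam (s15e Fs hFcard q) 0 ^ (b - s)
            * c (s15e Fs hFcard q'') b (s15upd Fs hFcard a₀ z) := by
    intro q q'' r hrs z
    have hsplit : Finset.Icc 1 m = Finset.Icc 1 s ∪ Finset.Ioc s m := by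
      rw [show (1:ℕ) = 0 + 1 from rfl, Finset.Icc_add_one_left_eq_Ioc, Finset.Icc_add_one_left_eq_Ioc,
        Finset.Ioc_union_Ioc_eq_Ioc (Nat.zero_le s) hsm]
    have hdisj2 : Disjoint (Finset.Icc 1 s) (Finset.Ioc s m) := by
      rw [Finset.disjoint_left]
      intro b hb1 hb2
      rw [Finset.mem_Icc] at hb1
      rw [Finset.mem_Ioc] at hb2
      omega
    rw [hsplit, Finset.sum_union hdisj2, sub_eq_add_neg]
    congr 1
    · have hstep : ∀ b ∈ Finset.Icc 1 s, s15eta lam Fs hFcard q (r:ℕ) b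
          * c (s15e Fs hFcard q'') b (s15upd Fs hFcard a₀ z)
          = if b = r+1 then c (s15e Fs hFcard q'') b (s15upd Fs hFcard a₀ z) else 0 := by
        intro b hb
        rw [Finset.mem_Icc] at hb
        have hnb : ¬ s < b := by omega
        simp [s15eta, hnb, ite_mul]
      rw [Finset.sum_congr rfl hstep, Finset.sum_ite_eq' (Finset.Icc 1 s)]
      rw [if_pos (by rw [Finset.mem_Icc]; omega)]
    · rw [← Finset.sum_neg_distrib]
      refine Finset.sum_congr rfl fun b hb => ?_
      rw [Finset.mem_Ioc] at hb
      have hbr : b ≠ r+1 := by omega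
      simp [s15eta, hbr, hb.1, neg_mul]
  have ownA : ∀ (q : Fin h) (r : ℕ), r < s → ∀ (z : Fin h → Fin s),
      ∑ b ∈ Finset.Icc 1 m, s15eta lam Fs hFcard q r b
        * c (s15e Fs hFcard q) b (s15upd Fs hFcard a₀ z) = 0 := by
    have hE0 : ∀ (q : Fin h) (z : Fin h → Fin s),
        ∑ b ∈ Finset.Icc 1 m, s15eta lam Fs hFcard q 0 b
          * c (s15e Fs hFcard q) b (s15upd Fs hFcard a₀ z) = 0 := by
      intro q z
      have h0 := (key q 0 hs1 z).1 (z q)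
      rw [Function.update_eq_self, expand] at h0
      have h00 : (1 + c₀) * (∑ b ∈ Finset.Icc 1 m, s15eta lam Fs hFcard q 0 b
          * c (s15e Fs hFcard q) b (s15upd Fs hFcard a₀ z)) = 0 := by
        rw [pow_zero] at h0
        linear_combination h0
      exact (mul_eq_zero.mp h00).resolve_left hc₀1
    intro q r hrs z
    have hr := (key q r hrs z).1 (z q)
    rw [Function.update_eq_self, expand, hE0 q z, mul_zero, add_zero] at hr
    exact hr
  have A' : ∀ (q : Fin h) (r : ℕ), r < s → ∀ (z : Fin h → Fin s),
      c (s15e Fs hFcard q) (r+1) (s15upd Fs hFcard a₀ z)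
      = ∑ b ∈ Finset.Ioc s m, lam (s15e Fs hFcard q) 0 ^ (b-s)
          * c (s15e Fs hFcard q) b (s15upd Fs hFcard a₀ z) := by
    intro q r hrs z
    have h1 := ownA q r hrs z
    rw [eta_split q q r hrs z] at h1
    exact sub_eq_zero.mp h1
  have cross : ∀ (q q' : Fin h), q' ≠ q → ∀ (r : ℕ), r < s → ∀ (x : Fin h → Fin s),
      ∑ x'' : Fin s, (1 + c₀ * lam (s15e Fs hFcard q) x'' ^ r) *
        (∑ b ∈ Finset.Ioc s m, (lam (s15e Fs hFcard q') 0 ^ (b-s) - lam (s15e Fs hFcard q) 0 ^ (b-s))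
          * c (s15e Fs hFcard q') b (s15upd Fs hFcard a₀ (Function.update x q x''))) = 0 := by
    intro q q' hqq r hrs x
    have hB := (key q r hrs x).2 q' hqq
    have inner : ∀ x'' : Fin s,
        (1 + c₀ * lam (s15e Fs hFcard q) x'' ^ r) *
          (∑ b ∈ Finset.Ioc s m, (lam (s15e Fs hFcard q') 0 ^ (b-s) - lam (s15e Fs hFcard q) 0 ^ (b-s))
            * c (s15e Fs hFcard q') b (s15upd Fs hFcard a₀ (Function.update x q x'')))
        = ∑ b ∈ Finset.Icc 1 m, s15W lam Fs hFcard c₀ q r x'' b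
            * c (s15e Fs hFcard q') b (s15upd Fs hFcard a₀ (Function.update x q x'')) := by
      intro x''
      rw [expand, eta_split q q' r hrs, eta_split q q' 0 hs1, A' q' r hrs, A' q' 0 hs1]
      have hsub : ∑ b ∈ Finset.Ioc s m,
          (lam (s15e Fs hFcard q') 0 ^ (b-s) - lam (s15e Fs hFcard q) 0 ^ (b-s))
            * c (s15e Fs hFcard q') b (s15upd Fs hFcard a₀ (Function.update x q x''))
          = (∑ b ∈ Finset.Ioc s m, lam (s15e Fs hFcard q') 0 ^ (b-s)
              * c (s15e Fs hFcard q') b (s15upd Fs hFcard a₀ (Function.update x q x'')))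
            - ∑ b ∈ Finset.Ioc s m, lam (s15e Fs hFcard q) 0 ^ (b-s)
              * c (s15e Fs hFcard q') b (s15upd Fs hFcard a₀ (Function.update x q x'')) := by
        rw [← Finset.sum_sub_distrib]
        exact Finset.sum_congr rfl fun b _ => sub_mul _ _ _
      rw [hsub]
      ring
    calc ∑ x'' : Fin s, (1 + c₀ * lam (s15e Fs hFcard q) x'' ^ r) *
        (∑ b ∈ Finset.Ioc s m, (lam (s15e Fs hFcard q') 0 ^ (b-s) - lam (s15e Fs hFcard q) 0 ^ (b-s))
          * c (s15e Fs hFcard q') b (s15upd Fs hFcard a₀ (Function.update x q x'')))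
        = ∑ x'' : Fin s, ∑ b ∈ Finset.Icc 1 m, s15W lam Fs hFcard c₀ q r x'' b
            * c (s15e Fs hFcard q') b (s15upd Fs hFcard a₀ (Function.update x q x'')) :=
          Finset.sum_congr rfl fun x'' _ => inner x''
      _ = 0 := hB
  have xizero : ∀ (q q' : Fin h), q' ≠ q → ∀ z : Fin h → Fin s,
      ∑ b ∈ Finset.Ioc s m, (lam (s15e Fs hFcard q') 0 ^ (b-s) - lam (s15e Fs hFcard q) 0 ^ (b-s))
        * c (s15e Fs hFcard q') b (s15upd Fs hFcard a₀ z) = 0 := by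
    intro q q' hqq z
    have S0 : ∀ x : Fin h → Fin s, ∑ x'' : Fin s,
        (∑ b ∈ Finset.Ioc s m, (lam (s15e Fs hFcard q') 0 ^ (b-s) - lam (s15e Fs hFcard q) 0 ^ (b-s))
          * c (s15e Fs hFcard q') b (s15upd Fs hFcard a₀ (Function.update x q x''))) = 0 := by
      intro x
      have h0 := cross q q' hqq 0 hs1 x
      simp only [pow_zero, mul_one] at h0
      rw [← Finset.mul_sum] at h0
      exact (mul_eq_zero.mp h0).resolve_left hc₀1
    have Spow : ∀ (r : ℕ), r < s → ∀ x : Fin h → Fin s,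
        ∑ x'' : Fin s, lam (s15e Fs hFcard q) x'' ^ r *
          (∑ b ∈ Finset.Ioc s m, (lam (s15e Fs hFcard q') 0 ^ (b-s) - lam (s15e Fs hFcard q) 0 ^ (b-s))
            * c (s15e Fs hFcard q') b (s15upd Fs hFcard a₀ (Function.update x q x''))) = 0 := by
      intro r hrs x
      have hc := cross q q' hqq r hrs x
      have hstep : ∀ x'' : Fin s, (1 + c₀ * lam (s15e Fs hFcard q) x'' ^ r) *
          (∑ b ∈ Finset.Ioc s m, (lam (s15e Fs hFcard q') 0 ^ (b-s) - lam (s15e Fs hFcard q) 0 ^ (b-s))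
            * c (s15e Fs hFcard q') b (s15upd Fs hFcard a₀ (Function.update x q x'')))
          = (∑ b ∈ Finset.Ioc s m, (lam (s15e Fs hFcard q') 0 ^ (b-s) - lam (s15e Fs hFcard q) 0 ^ (b-s))
            * c (s15e Fs hFcard q') b (s15upd Fs hFcard a₀ (Function.update x q x'')))
            + c₀ * (lam (s15e Fs hFcard q) x'' ^ r *
              (∑ b ∈ Finset.Ioc s m, (lam (s15e Fs hFcard q') 0 ^ (b-s) - lam (s15e Fs hFcard q) 0 ^ (b-s))
                * c (s15e Fs hFcard q') b (s15upd Fs hFcard a₀ (Function.update x q x'')))) := by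
        intro x''
        ring
      rw [Finset.sum_congr rfl (fun x'' _ => hstep x''), Finset.sum_add_distrib, S0 x,
        ← Finset.mul_sum, zero_add] at hc
      exact (mul_eq_zero.mp hc).resolve_left hc₀0
    have hβinj : Function.Injective (fun y : Fin s => lam (s15e Fs hFcard q) y) := by
      intro y1 y2 hy
      have hp := hlam (a₁ := (s15e Fs hFcard q, y1)) (a₂ := (s15e Fs hFcard q, y2)) hy
      rw [Prod.mk.injEq] at hp
      exact hp.2
    have hkill := s15_vkill (fun y : Fin s => lam (s15e Fs hFcard q) y) hβinj
        (fun x'' : Fin s => ∑ b ∈ Finset.Ioc s m,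
          (lam (s15e Fs hFcard q') 0 ^ (b-s) - lam (s15e Fs hFcard q) 0 ^ (b-s))
            * c (s15e Fs hFcard q') b (s15upd Fs hFcard a₀ (Function.update z q x'')))
        s (by simp) (fun t ht => Spow t ht z)
    have hz := hkill (z q)
    simp only [Function.update_eq_self] at hz
    exact hz
  have tail0 : ∀ (q' : Fin h) (z : Fin h → Fin s), ∀ b ∈ Finset.Ioc s m,
      c (s15e Fs hFcard q') b (s15upd Fs hFcard a₀ z) = 0 := by
    intro q' z
    have hrel : ∀ q : Fin h, ∑ b ∈ Finset.Ioc s m, lam (s15e Fs hFcard q) 0 ^ (b-s)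
        * c (s15e Fs hFcard q') b (s15upd Fs hFcard a₀ z)
        = ∑ b ∈ Finset.Ioc s m, lam (s15e Fs hFcard q') 0 ^ (b-s)
        * c (s15e Fs hFcard q') b (s15upd Fs hFcard a₀ z) := by
      intro q
      by_cases hq : q' = q
      · rw [hq]
      · have hx := xizero q q' hq z
        have hsub : ∑ b ∈ Finset.Ioc s m,
            (lam (s15e Fs hFcard q') 0 ^ (b-s) - lam (s15e Fs hFcard q) 0 ^ (b-s))
              * c (s15e Fs hFcard q') b (s15upd Fs hFcard a₀ z)
            = (∑ b ∈ Finset.Ioc s m, lam (s15e Fs hFcard q') 0 ^ (b-s)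
                * c (s15e Fs hFcard q') b (s15upd Fs hFcard a₀ z))
              - ∑ b ∈ Finset.Ioc s m, lam (s15e Fs hFcard q) 0 ^ (b-s)
                * c (s15e Fs hFcard q') b (s15upd Fs hFcard a₀ z) := by
          rw [← Finset.sum_sub_distrib]
          exact Finset.sum_congr rfl fun b _ => sub_mul _ _ _
        rw [hsub] at hx
        have := sub_eq_zero.mp hx
        rw [this]
    haveI : NeZero h := ⟨by omega⟩
    have hsummap : ∀ (g : ℕ → F), ∑ b ∈ Finset.Ioc s m, g b = ∑ t ∈ Finset.Ico 1 h, g (s + t) := by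
      intro g
      have hset : Finset.Ioc s m = Finset.map (addLeftEmbedding s) (Finset.Ico 1 h) := by
        rw [Finset.map_add_left_Ico]
        ext b
        rw [Finset.mem_Ioc, Finset.mem_Ico]
        omega
      rw [hset, Finset.sum_map]
      simp [addLeftEmbedding_apply]
    set K := ∑ b ∈ Finset.Ioc s m, lam (s15e Fs hFcard q') 0 ^ (b-s)
        * c (s15e Fs hFcard q') b (s15upd Fs hFcard a₀ z) with hK
    have heval : ∀ qq : Fin h, ∑ t : Fin h,
        (if (t : ℕ) = 0 then -K else c (s15e Fs hFcard q') (s + (t:ℕ)) (s15upd Fs hFcard a₀ z))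
          * lam (s15e Fs hFcard qq) 0 ^ (t:ℕ) = 0 := by
      intro qq
      rw [Fin.sum_univ_eq_sum_range (fun t => (if t = 0 then -K
        else c (s15e Fs hFcard q') (s+t) (s15upd Fs hFcard a₀ z))
          * lam (s15e Fs hFcard qq) 0 ^ t) h]
      rw [Finset.range_eq_Ico, ← Finset.sum_Ico_consecutive _ (Nat.zero_le 1) (by omega : 1 ≤ h)]
      have h1 : ∑ t ∈ Finset.Ico 0 1, (if t = 0 then -K
          else c (s15e Fs hFcard q') (s+t) (s15upd Fs hFcard a₀ z))
            * lam (s15e Fs hFcard qq) 0 ^ t = -K := by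
        rw [← Finset.range_eq_Ico, Finset.sum_range_one]
        simp
      have h2 : ∑ t ∈ Finset.Ico 1 h, (if t = 0 then -K
          else c (s15e Fs hFcard q') (s+t) (s15upd Fs hFcard a₀ z))
            * lam (s15e Fs hFcard qq) 0 ^ t
          = ∑ b ∈ Finset.Ioc s m, lam (s15e Fs hFcard qq) 0 ^ (b-s)
            * c (s15e Fs hFcard q') b (s15upd Fs hFcard a₀ z) := by
        rw [hsummap (fun b => lam (s15e Fs hFcard qq) 0 ^ (b-s)
          * c (s15e Fs hFcard q') b (s15upd Fs hFcard a₀ z))]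
        refine Finset.sum_congr rfl fun t ht => ?_
        rw [Finset.mem_Ico] at ht
        have ht0 : ¬ (t = 0) := by omega
        rw [if_neg ht0, show s + t - s = t by omega, mul_comm]
      rw [h1, h2, hrel qq]
      ring
    have hγinj : Function.Injective (fun qq : Fin h => lam (s15e Fs hFcard qq) 0) := by
      intro q1 q2 hq
      have hp := hlam (a₁ := (s15e Fs hFcard q1, (0 : Fin s)))
        (a₂ := (s15e Fs hFcard q2, (0 : Fin s))) hq
      rw [Prod.mk.injEq] at hp
      exact s15e_inj Fs hFcard hp.1
    have hkill := s15_ekill (fun qq : Fin h => lam (s15e Fs hFcard qq) 0) hγinj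
        (fun t : Fin h => if (t : ℕ) = 0 then -K
          else c (s15e Fs hFcard q') (s + (t:ℕ)) (s15upd Fs hFcard a₀ z)) heval
    intro b hb
    rw [Finset.mem_Ioc] at hb
    have hbfin : b - s < h := by omega
    have hz := hkill ⟨b - s, hbfin⟩
    simp only [Fin.val_mk] at hz
    rw [if_neg (by omega : ¬ (b - s = 0)), show s + (b - s) = b by omega] at hz
    exact hz
  have allz : ∀ (q : Fin h), ∀ b ∈ Finset.Icc 1 m, ∀ z : Fin h → Fin s,
      c (s15e Fs hFcard q) b (s15upd Fs hFcard a₀ z) = 0 := by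
    intro q b hb z
    rw [Finset.mem_Icc] at hb
    by_cases hbs : s < b
    · exact tail0 q z b (by rw [Finset.mem_Ioc]; omega)
    · have hr : b - 1 < s := by omega
      have hA := A' q (b-1) hr z
      rw [show b - 1 + 1 = b by omega] at hA
      rw [hA]
      exact Finset.sum_eq_zero fun b' hb' => by rw [tail0 q z b' hb', mul_zero]
  have hfin := allz q₀ b₀ hb₀ (fun q => a₀ (s15e Fs hFcard q))
  rwa [s15upd_self] at hfin


/-- `C(n,k,s,m,λ)` achieves the optimal repair bandwidth under
the centralized model, where `h ≥ 2`, `s ≥ 1`, `d := k+s-1`, `m := s+h-1` and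
`h + d ≤ n`.  For any `h` failed nodes `Fs` and any `d` helper nodes `Rs`
there exist download functions `φ j : N → M^h` (each helper `j ∈ Rs` transmits
`h` messages, i.e. an element of `Fin h → ((Fin n → Fin s) → F) ≅ F^(h·s^n)`)
and a recovery function `ρ` such that all failed nodes recover all of their
coordinates `(b,a)`, `b ∈ {1,…,s+h-1}`.  The total download, `h·d·s^n` field
symbols, meets the centralized cut-set bound with equality. -/
theorem stmt_15 {F : Type*} [Field F] (n k h s : ℕ) [NeZero s]
    (hk : 1 ≤ k) (hh : 2 ≤ h) (hn : h + (k + s - 1) ≤ n)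
    (lam : Fin n → Fin s → F)
    (hlam : Function.Injective fun p : Fin n × Fin s => lam p.1 p.2)
    (Fs Rs : Finset (Fin n)) (hdisj : Disjoint Fs Rs)
    (hFcard : Fs.card = h) (hRcard : Rs.card = k + s - 1) :
    ∃ (φ : Fin n → (ℕ → (Fin n → Fin s) → F) → (Fin h → (Fin n → Fin s) → F))
      (ρ : ({j // j ∈ Rs} → Fin h → (Fin n → Fin s) → F) →
           ({u // u ∈ Fs} → ℕ → (Fin n → Fin s) → F)),
      ∀ c : Fin n → ℕ → (Fin n → Fin s) → F, IsCodeword k s (s + h - 1) lam c →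
        ∀ u : {u // u ∈ Fs}, ∀ b ∈ Finset.Icc 1 (s + h - 1), ∀ a : Fin n → Fin s,
          ρ (fun j => φ j.1 (c j.1)) u b a = c u.1 b a := by
  classical
  have hs1 : 1 ≤ s := NeZero.one_le
  have hn3 : 3 ≤ n := by omega
  obtain ⟨c₀, hc₀0, hc₀1⟩ : ∃ x : F, x ≠ 0 ∧ 1 + x ≠ 0 := by
    apply s15_c0 (lam ⟨0, by omega⟩ 0) (lam ⟨1, by omega⟩ 0) (lam ⟨2, by omega⟩ 0)
    · intro hEq
      have hp := hlam (a₁ := (⟨0, by omega⟩, (0 : Fin s)))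
        (a₂ := (⟨1, by omega⟩, (0 : Fin s))) hEq
      rw [Prod.mk.injEq] at hp
      exact absurd hp.1 (by simp)
    · intro hEq
      have hp := hlam (a₁ := (⟨0, by omega⟩, (0 : Fin s)))
        (a₂ := (⟨2, by omega⟩, (0 : Fin s))) hEq
      rw [Prod.mk.injEq] at hp
      exact absurd hp.1 (by simp)
    · intro hEq
      have hp := hlam (a₁ := (⟨1, by omega⟩, (0 : Fin s)))
        (a₂ := (⟨2, by omega⟩, (0 : Fin s))) hEq
      rw [Prod.mk.injEq] at hp
      exact absurd hp.1 (by simp)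
  refine ⟨s15phi lam Fs hFcard c₀, fun D =>
    if hEx : ∃ c', IsCodeword k s (s + h - 1) lam c' ∧
        ∀ j : {j // j ∈ Rs}, s15phi lam Fs hFcard c₀ j.1 (c' j.1) = D j
    then fun u b a => hEx.choose u.1 b a else fun _ _ _ => 0, ?_⟩
  intro c hcode u b hb a
  have hEx : ∃ c', IsCodeword k s (s + h - 1) lam c' ∧
      ∀ j : {j // j ∈ Rs}, s15phi lam Fs hFcard c₀ j.1 (c' j.1)
        = s15phi lam Fs hFcard c₀ j.1 (c j.1) :=
    ⟨c, hcode, fun _ => rfl⟩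
  show (if hEx2 : ∃ c', IsCodeword k s (s + h - 1) lam c' ∧
      ∀ j : {j // j ∈ Rs}, s15phi lam Fs hFcard c₀ j.1 (c' j.1)
        = s15phi lam Fs hFcard c₀ j.1 (c j.1)
    then fun (u : {u // u ∈ Fs}) b a => hEx2.choose u.1 b a
    else fun _ _ _ => 0) u b a = c u.1 b a
  rw [dif_pos hEx]
  obtain ⟨hc'code, hc'tr⟩ := hEx.choose_spec
  set c' := hEx.choose with hc'
  set cd : Fin n → ℕ → (Fin n → Fin s) → F := fun i bb aa => c' i bb aa - c i bb aa with hcd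
  have hcdcode : IsCodeword k s (s + h - 1) lam cd := by
    intro t ht b' hb' a'
    simp only [hcd, mul_sub]
    rw [Finset.sum_sub_distrib, hc'code t ht b' hb' a', hcode t ht b' hb' a', sub_zero]
  have hcdtr : ∀ j ∈ Rs, ∀ q a', s15phi lam Fs hFcard c₀ j (cd j) q a' = 0 := by
    intro j hj q a'
    have h2 : s15phi lam Fs hFcard c₀ j (c' j) q a'
        = s15phi lam Fs hFcard c₀ j (c j) q a' :=
      congrFun (congrFun (hc'tr ⟨j, hj⟩) q) a'
    have h3 : s15phi lam Fs hFcard c₀ j (cd j) q a'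
        = s15phi lam Fs hFcard c₀ j (c' j) q a'
          - s15phi lam Fs hFcard c₀ j (c j) q a' := by
      unfold s15phi
      simp only [hcd, mul_sub]
      rw [← Finset.sum_sub_distrib]
      refine Finset.sum_congr rfl fun x'' _ => ?_
      rw [← Finset.sum_sub_distrib]
    rw [h3, h2, sub_self]
  have hq₀ : s15e Fs hFcard (s15E Fs hFcard u) = u.1 := s15e_E Fs hFcard u.1 u.2
  have hker := s15_kernel hk hh hn lam hlam Fs Rs hdisj hFcard hRcard c₀ hc₀0 hc₀1
    cd hcdcode hcdtr (s15E Fs hFcard u) b hb a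
  rw [hq₀] at hker
  simp only [hcd] at hker
  exact sub_eq_zero.mp hker
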